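/- Let k ≥ 0 and let μ(x) = Σ_{i=0}^k a_i x^i be a polynomial density (with respect to Lebesgue measure). Suppose ∫_{-∞}^∞ sign(t - x)·φ(t - x)·μ(x) dx = 0 for all t ∈ ℝ, where φ is the standard normal density. Then a_i = 0 for all i ≥ 1, i.e., μ is constant. -/

import Mathlib

open MeasureTheory ProbabilityTheory Real

namespace PDCCAux

lemma measurable_sign' : Measurable Real.sign := by
  have h : Real.sign = fun r : ℝ => if r < 0 then (-1:ℝ) else if 0 < r then 1 else 0 := rfl
  rw [h]
  exact Measurable.ite measurableSet_Iio measurable_const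
    (Measurable.ite measurableSet_Ioi measurable_const measurable_const)

lemma norm_sign_le (r : ℝ) : ‖Real.sign r‖ ≤ 1 := by
  rcases Real.sign_apply_eq r with h | h | h <;> rw [h] <;> norm_num

lemma integrable_pow_gauss (n : ℕ) :
    Integrable (fun x : ℝ => x ^ n * Real.exp (-(2⁻¹:ℝ) * x ^ 2)) := by
  have hg : Integrable (fun x : ℝ => Real.exp (-(2⁻¹:ℝ) * x ^ 2)
      + (4 ^ n * (Nat.factorial n : ℝ)) * Real.exp (-(4⁻¹:ℝ) * x ^ 2)) :=
    (integrable_exp_neg_mul_sq (by norm_num)).add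
      ((integrable_exp_neg_mul_sq (by norm_num)).const_mul _)
  refine hg.mono' ?_ (ae_of_all _ fun x => ?_)
  · exact ((measurable_id.pow_const n).mul
      (((measurable_id.pow_const 2).const_mul _).exp)).aestronglyMeasurable
  · have hexp : (0:ℝ) < Real.exp (-(2⁻¹:ℝ) * x ^ 2) := Real.exp_pos _
    have h1 : |x| ^ n ≤ 1 + (x ^ 2) ^ n := by
      rcases le_total (|x|) 1 with h | h
      · have hx1 : |x| ^ n ≤ 1 := pow_le_one₀ (abs_nonneg x) h
        nlinarith [pow_nonneg (sq_nonneg x) n]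
      · have h2 : |x| ^ n ≤ (|x| ^ 2) ^ n := by
          rw [← pow_mul]
          exact pow_le_pow_right₀ h (by omega)
        rw [sq_abs] at h2
        nlinarith
    have hb : (0:ℝ) ≤ 4⁻¹ * x ^ 2 := by positivity
    have h2 : (x ^ 2) ^ n ≤ 4 ^ n * ((Nat.factorial n : ℝ) * Real.exp (4⁻¹ * x ^ 2)) := by
      have h3 := Real.pow_div_factorial_le_exp (4⁻¹ * x ^ 2) hb n
      rw [div_le_iff₀ (by positivity)] at h3
      calc (x ^ 2) ^ n = 4 ^ n * (4⁻¹ * x ^ 2) ^ n := by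
            rw [← mul_pow]
            congr 1
            ring
        _ ≤ 4 ^ n * ((Nat.factorial n : ℝ) * Real.exp (4⁻¹ * x ^ 2)) := by
            refine mul_le_mul_of_nonneg_left ?_ (by positivity)
            exact h3.trans_eq (mul_comm _ _)
    have hmul : Real.exp (4⁻¹ * x ^ 2) * Real.exp (-(2⁻¹:ℝ) * x ^ 2)
        = Real.exp (-(4⁻¹:ℝ) * x ^ 2) := by
      rw [← Real.exp_add]; congr 1; ring
    have h4 : (x ^ 2) ^ n * Real.exp (-(2⁻¹:ℝ) * x ^ 2)
        ≤ (4 ^ n * (Nat.factorial n : ℝ)) * Real.exp (-(4⁻¹:ℝ) * x ^ 2) := by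
      have h5 := mul_le_mul_of_nonneg_right h2 hexp.le
      calc (x ^ 2) ^ n * Real.exp (-(2⁻¹:ℝ) * x ^ 2)
          ≤ 4 ^ n * ((Nat.factorial n : ℝ) * Real.exp (4⁻¹ * x ^ 2)) * Real.exp (-(2⁻¹:ℝ) * x ^ 2) := h5
        _ = (4 ^ n * (Nat.factorial n : ℝ)) * (Real.exp (4⁻¹ * x ^ 2) * Real.exp (-(2⁻¹:ℝ) * x ^ 2)) := by
            ring
        _ = (4 ^ n * (Nat.factorial n : ℝ)) * Real.exp (-(4⁻¹:ℝ) * x ^ 2) := by rw [hmul]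
    calc ‖x ^ n * Real.exp (-(2⁻¹:ℝ) * x ^ 2)‖
        = |x| ^ n * Real.exp (-(2⁻¹:ℝ) * x ^ 2) := by
          rw [Real.norm_eq_abs, abs_mul, abs_pow, abs_of_pos hexp]
      _ ≤ (1 + (x ^ 2) ^ n) * Real.exp (-(2⁻¹:ℝ) * x ^ 2) :=
          mul_le_mul_of_nonneg_right h1 hexp.le
      _ ≤ Real.exp (-(2⁻¹:ℝ) * x ^ 2) + (4 ^ n * (Nat.factorial n : ℝ)) * Real.exp (-(4⁻¹:ℝ) * x ^ 2) := by
          nlinarith [h4]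

lemma gauss_eq (s : ℝ) :
    gaussianPDFReal 0 1 s = (Real.sqrt (2 * π))⁻¹ * Real.exp (-(2⁻¹:ℝ) * s ^ 2) := by
  simp only [gaussianPDFReal, NNReal.coe_one, mul_one, sub_zero]
  have h : -s ^ 2 / 2 = -(2⁻¹:ℝ) * s ^ 2 := by ring
  rw [h]

lemma integrable_gauss_pow (n : ℕ) :
    Integrable fun s : ℝ => gaussianPDFReal 0 1 s * s ^ n := by
  have h := (integrable_pow_gauss n).const_mul (Real.sqrt (2 * π))⁻¹
  refine h.congr (ae_of_all _ fun s => ?_)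
  show (Real.sqrt (2 * π))⁻¹ * (s ^ n * Real.exp (-(2⁻¹:ℝ) * s ^ 2)) = gaussianPDFReal 0 1 s * s ^ n
  rw [gauss_eq]; ring

lemma integrable_sign_gauss_pow (n : ℕ) :
    Integrable fun s : ℝ => Real.sign s * (gaussianPDFReal 0 1 s * s ^ n) :=
  (integrable_gauss_pow n).bdd_mul measurable_sign'.aestronglyMeasurable (c := 1) (ae_of_all _ norm_sign_le)

noncomputable def eps (n : ℕ) : ℝ :=
  ∫ s : ℝ, Real.sign s * (gaussianPDFReal 0 1 s * s ^ n)

lemma eps_zero : eps 0 = 0 := by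
  have heq : ∀ s : ℝ, Real.sign (-s) * (gaussianPDFReal 0 1 (-s) * (-s) ^ 0)
      = -(Real.sign s * (gaussianPDFReal 0 1 s * s ^ 0)) := by
    intro s
    have hg : gaussianPDFReal 0 1 (-s) = gaussianPDFReal 0 1 s := by
      rw [gauss_eq, gauss_eq, neg_pow, pow_two, pow_two]; ring_nf
    rw [Real.sign_neg, pow_zero, pow_zero, hg]; ring
  have h : eps 0 = -eps 0 := by
    calc eps 0 = ∫ s : ℝ, Real.sign (-s) * (gaussianPDFReal 0 1 (-s) * (-s) ^ 0) :=
          (integral_neg_eq_self _ volume).symm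
      _ = ∫ s : ℝ, -(Real.sign s * (gaussianPDFReal 0 1 s * s ^ 0)) :=
          integral_congr_ae (ae_of_all _ heq)
      _ = -eps 0 := integral_neg _
  linarith

lemma eps_one_pos : 0 < eps 1 := by
  have heq : ∀ s : ℝ, Real.sign s * (gaussianPDFReal 0 1 s * s ^ 1)
      = |s| * gaussianPDFReal 0 1 s := by
    intro s; rw [pow_one]
    rcases lt_trichotomy s 0 with h | h | h
    · rw [Real.sign_of_neg h, abs_of_neg h]; ring
    · simp [h]
    · rw [Real.sign_of_pos h, abs_of_pos h]; ring
  have hint : Integrable (fun s : ℝ => |s| * gaussianPDFReal 0 1 s) :=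
    (integrable_sign_gauss_pow 1).congr (ae_of_all _ heq)
  have h : eps 1 = ∫ s : ℝ, |s| * gaussianPDFReal 0 1 s :=
    integral_congr_ae (ae_of_all _ heq)
  rw [h, integral_pos_iff_support_of_nonneg
    (fun s => mul_nonneg (abs_nonneg s) (gaussianPDFReal_nonneg 0 1 s)) hint]
  have hsub : Set.Ioi (0:ℝ) ⊆ Function.support fun s => |s| * gaussianPDFReal 0 1 s := by
    intro s hs
    have h1 : (0:ℝ) < s := hs
    have h2 := gaussianPDFReal_pos 0 1 s one_ne_zero
    exact ne_of_gt (by positivity)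
  calc (0:ENNReal) < volume (Set.Ioi (0:ℝ)) := by
        rw [Real.volume_Ioi]; exact ENNReal.zero_lt_top
    _ ≤ _ := measure_mono hsub

end PDCCAux

open PDCCAux Finset

theorem polynomial_density_convolution_constant
    (k : ℕ) (a : ℕ → ℝ)
    (hconv : ∀ t : ℝ,
      ∫ x : ℝ, Real.sign (t - x) * gaussianPDFReal 0 1 (t - x) *
        (∑ i ∈ Finset.range (k + 1), a i * x ^ i) = 0) :
    ∀ i : ℕ, 1 ≤ i → i ≤ k → a i = 0 := by
  classical
  -- Step 1: change of variables
  have h1 : ∀ t : ℝ, (∫ s : ℝ, Real.sign s * gaussianPDFReal 0 1 s *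
      (∑ i ∈ Finset.range (k + 1), a i * (t - s) ^ i)) = 0 := by
    intro t
    have h := integral_sub_left_eq_self (fun x : ℝ =>
      Real.sign (t - x) * gaussianPDFReal 0 1 (t - x) *
        (∑ i ∈ Finset.range (k + 1), a i * x ^ i)) volume t
    simp only [sub_sub_cancel] at h
    rw [h]; exact hconv t
  -- Step 2: expand and integrate term by term
  have h2 : ∀ t : ℝ, (∑ i ∈ Finset.range (k + 1), ∑ j ∈ Finset.range (i + 1),
      a i * ((-1:ℝ) ^ (j + i) * t ^ j * (i.choose j : ℝ)) * eps (i - j)) = 0 := by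
    intro t
    have expand : ∀ s : ℝ, Real.sign s * gaussianPDFReal 0 1 s *
        (∑ i ∈ Finset.range (k + 1), a i * (t - s) ^ i)
        = ∑ i ∈ Finset.range (k + 1), ∑ j ∈ Finset.range (i + 1),
          a i * ((-1:ℝ) ^ (j + i) * t ^ j * (i.choose j : ℝ)) *
            (Real.sign s * (gaussianPDFReal 0 1 s * s ^ (i - j))) := by
      intro s
      rw [Finset.mul_sum]
      refine Finset.sum_congr rfl fun i _ => ?_
      rw [sub_pow]
      simp only [Finset.mul_sum]
      refine Finset.sum_congr rfl fun j _ => ?_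
      ring
    have hInt : ∀ i ∈ Finset.range (k + 1), ∀ j ∈ Finset.range (i + 1),
        Integrable (fun s : ℝ => a i * ((-1:ℝ) ^ (j + i) * t ^ j * (i.choose j : ℝ)) *
          (Real.sign s * (gaussianPDFReal 0 1 s * s ^ (i - j)))) :=
      fun i _ j _ => (integrable_sign_gauss_pow (i - j)).const_mul _
    calc (∑ i ∈ Finset.range (k + 1), ∑ j ∈ Finset.range (i + 1),
          a i * ((-1:ℝ) ^ (j + i) * t ^ j * (i.choose j : ℝ)) * eps (i - j))
        = ∫ s : ℝ, ∑ i ∈ Finset.range (k + 1), ∑ j ∈ Finset.range (i + 1),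
            a i * ((-1:ℝ) ^ (j + i) * t ^ j * (i.choose j : ℝ)) *
              (Real.sign s * (gaussianPDFReal 0 1 s * s ^ (i - j))) := by
          rw [integral_finset_sum _ (fun i hi =>
            integrable_finset_sum _ (fun j hj => hInt i hi j hj))]
          refine Finset.sum_congr rfl fun i hi => ?_
          rw [integral_finset_sum _ (fun j hj => hInt i hi j hj)]
          refine Finset.sum_congr rfl fun j hj => ?_
          rw [integral_const_mul]
          rfl
      _ = ∫ s : ℝ, Real.sign s * gaussianPDFReal 0 1 s *
            (∑ i ∈ Finset.range (k + 1), a i * (t - s) ^ i) :=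
          integral_congr_ae (ae_of_all _ fun s => (expand s).symm)
      _ = 0 := h1 t
  -- Step 3: all polynomial coefficients vanish
  have h3 : ∀ m : ℕ, (∑ i ∈ Finset.range (k + 1),
      if m ≤ i then a i * ((-1:ℝ) ^ (m + i) * (i.choose m : ℝ)) * eps (i - m) else 0) = 0 := by
    intro m
    set P : Polynomial ℝ := ∑ i ∈ Finset.range (k + 1), ∑ j ∈ Finset.range (i + 1),
      Polynomial.C (a i * ((-1:ℝ) ^ (j + i) * (i.choose j : ℝ)) * eps (i - j)) *
        Polynomial.X ^ j with hP
    have hPeval : ∀ t : ℝ, P.eval t = 0 := by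
      intro t
      rw [hP]
      simp only [Polynomial.eval_finset_sum, Polynomial.eval_mul, Polynomial.eval_pow,
        Polynomial.eval_C, Polynomial.eval_X]
      rw [← h2 t]
      exact Finset.sum_congr rfl fun i _ => Finset.sum_congr rfl fun j _ => by ring
    have hP0 : P = 0 := Polynomial.funext fun t => by rw [hPeval t, Polynomial.eval_zero]
    have hc := congrArg (fun q : Polynomial ℝ => q.coeff m) hP0
    simp only [hP, Polynomial.finset_sum_coeff, Polynomial.coeff_C_mul_X_pow,
      Polynomial.coeff_zero] at hc
    calc (∑ i ∈ Finset.range (k + 1),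
        if m ≤ i then a i * ((-1:ℝ) ^ (m + i) * (i.choose m : ℝ)) * eps (i - m) else 0)
        = ∑ i ∈ Finset.range (k + 1), ∑ j ∈ Finset.range (i + 1),
            if m = j then a i * ((-1:ℝ) ^ (j + i) * (i.choose j : ℝ)) * eps (i - j) else 0 := by
          refine Finset.sum_congr rfl fun i _ => ?_
          rw [Finset.sum_ite_eq]
          simp [Finset.mem_range, Nat.lt_succ_iff]
      _ = 0 := hc
  -- Step 4: downward induction
  have key : ∀ n : ℕ, 1 ≤ n → n ≤ k → (∀ m, n < m → m ≤ k → a m = 0) → a n = 0 := by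
    intro n hn1 hnk ih
    have hc := h3 (n - 1)
    rw [Finset.sum_eq_single n] at hc
    · rw [if_pos (by omega : n - 1 ≤ n)] at hc
      have e1 : n - (n - 1) = 1 := by omega
      have e2 : ((-1:ℝ)) ^ (n - 1 + n) = -1 := Odd.neg_one_pow ⟨n - 1, by omega⟩
      have e3 : ((n.choose (n - 1) : ℕ) : ℝ) = (n : ℝ) := by
        rw [Nat.choose_symm hn1, Nat.choose_one_right]
      rw [e1, e2, e3] at hc
      have hn0 : (n:ℝ) ≠ 0 := Nat.cast_ne_zero.mpr (by omega)
      have he : eps 1 ≠ 0 := ne_of_gt eps_one_pos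
      rcases mul_eq_zero.mp hc with h | h
      · rcases mul_eq_zero.mp h with h' | h'
        · exact h'
        · exfalso; apply hn0; linarith
      · exact absurd h he
    · intro i hi hine
      rw [Finset.mem_range] at hi
      by_cases hle : n - 1 ≤ i
      · rw [if_pos hle]
        rcases Nat.lt_or_ge i n with hlt | hge
        · have hieq : i - (n - 1) = 0 := by omega
          rw [hieq, eps_zero, mul_zero]
        · have ha0 : a i = 0 := ih i (by omega) (by omega)
          rw [ha0, zero_mul, zero_mul]
      · rw [if_neg hle]
    · intro hn; exact absurd (Finset.mem_range.mpr (by omega)) hn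
  have main : ∀ d : ℕ, ∀ n : ℕ, 1 ≤ n → n ≤ k → k - n < d → a n = 0 := by
    intro d
    induction d with
    | zero => intro n _ _ h; omega
    | succ d ihd =>
      intro n hn1 hnk hd
      exact key n hn1 hnk fun m hm hmk => ihd m (by omega) hmk (by omega)
  intro i h1i hik
  exact main (k - i + 1) i h1i hik (by omega)
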